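/- Let R be a domain, σ : R → R an injective ring endomorphism, and δ : R → R a σ-derivation. Then: (i) no element of R[x;σ,δ] \ R is invertible in the Ore extension R[x;σ,δ]; (ii) if R[x;σ,δ] is a simple ring, then the center of R[x;σ,δ] is contained in R and equals the set of r ∈ Z(R) with δ(r) = 0. -/

import Mathlib

/-- `δ` is a `σ`-derivation of `R`: it is additive and satisfies the twisted Leibniz rule
`δ(ab) = σ(a)δ(b) + δ(a)b`. -/
def IsSigmaDerivation {R : Type*} [Ring R] (σ : R →+* R) (δ : R → R) : Prop :=
  (∀ a b : R, δ (a + b) = δ a + δ b) ∧ ∀ a b : R, δ (a * b) = σ a * δ b + δ a * b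

/-- `S`, together with the ring morphism `f : R →+* S` and the element `x : S`, is an Ore
extension `R[x;σ,δ]`: the powers `1, x, x², …` form a basis of `S` as a left `R`-module
(i.e. every element of `S` is, in a unique way, a finite sum `Σᵢ f(aᵢ) xⁱ`), and the
commutation rule `x·r = σ(r)·x + δ(r)` holds for all `r ∈ R`. -/
structure IsOreExtension {R S : Type*} [Ring R] [Ring S]
    (σ : R →+* R) (δ : R → R) (f : R →+* S) (x : S) : Prop where
  basis : Function.Bijective fun a : ℕ →₀ R => a.sum fun i r => f r * x ^ i
  rel : ∀ r : R, x * f r = f (σ r) * x + f (δ r)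

/-- `R` is `σ`-`δ`-simple: the only two-sided ideals `J` of `R` with `σ(J) ⊆ J` and
`δ(J) ⊆ J` are `{0}` and `R`. -/
def IsSigmaDeltaSimple {R : Type*} [Ring R] (σ : R →+* R) (δ : R → R) : Prop :=
  ∀ J : TwoSidedIdeal R, (∀ a ∈ J, σ a ∈ J) → (∀ a ∈ J, δ a ∈ J) → J = ⊥ ∨ J = ⊤

/-- `R` is `δ`-simple: the only two-sided ideals `J` of `R` with `δ(J) ⊆ J` are `{0}`
and `R`. -/
def IsDeltaSimple {R : Type*} [Ring R] (δ : R → R) : Prop :=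
  ∀ J : TwoSidedIdeal R, (∀ a ∈ J, δ a ∈ J) → J = ⊥ ∨ J = ⊤

namespace OreAux

variable {R S : Type*} [Ring R] [Ring S] {σ : R →+* R} {δ : R → R} {f : R →+* S} {x : S}

/-- The evaluation map as an `AddMonoidHom`. -/
noncomputable def E (f : R →+* S) (x : S) : (ℕ →₀ R) →+ S where
  toFun p := p.sum fun i r => f r * x ^ i
  map_zero' := Finsupp.sum_zero_index
  map_add' p q := by
    change (p + q).sum (fun i r => f r * x ^ i) =
      (p.sum fun i r => f r * x ^ i) + (q.sum fun i r => f r * x ^ i)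
    exact Finsupp.sum_add_index' (fun i => by simp) (fun i b c => by rw [map_add, add_mul])

lemma E_apply (p : ℕ →₀ R) : E f x p = p.sum fun i r => f r * x ^ i := rfl

lemma E_bij (hS : IsOreExtension σ δ f x) : Function.Bijective (E f x) := by
  show Function.Bijective fun a : ℕ →₀ R => a.sum fun i r => f r * x ^ i
  exact hS.basis

noncomputable def C (hS : IsOreExtension σ δ f x) : S → (ℕ →₀ R) :=
  fun s => (Equiv.ofBijective _ (E_bij hS)).symm s

lemma E_C (hS : IsOreExtension σ δ f x) (s : S) : E f x (C hS s) = s :=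
  (Equiv.ofBijective _ (E_bij hS)).apply_symm_apply s

lemma C_E (hS : IsOreExtension σ δ f x) (p : ℕ →₀ R) : C hS (E f x p) = p :=
  (Equiv.ofBijective _ (E_bij hS)).symm_apply_apply p

lemma C_inj (hS : IsOreExtension σ δ f x) : Function.Injective (C hS) :=
  fun a b h => by rw [← E_C hS a, h, E_C]

lemma C_eq_iff (hS : IsOreExtension σ δ f x) {s : S} {p : ℕ →₀ R} :
    C hS s = p ↔ s = E f x p := by
  constructor
  · rintro rfl; rw [E_C]
  · rintro rfl; rw [C_E]

lemma E_single (a : R) (i : ℕ) : E f x (Finsupp.single i a) = f a * x ^ i := by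
  rw [E_apply, Finsupp.sum_single_index]
  simp

lemma C_single (hS : IsOreExtension σ δ f x) (a : R) (i : ℕ) :
    C hS (f a * x ^ i) = Finsupp.single i a := by
  rw [C_eq_iff, E_single]

lemma C_f (hS : IsOreExtension σ δ f x) (a : R) : C hS (f a) = Finsupp.single 0 a := by
  simpa using C_single hS a 0

lemma C_one (hS : IsOreExtension σ δ f x) : C hS 1 = Finsupp.single 0 1 := by
  simpa using C_f hS 1

lemma C_x (hS : IsOreExtension σ δ f x) : C hS x = Finsupp.single 1 1 := by
  simpa using C_single hS 1 1

lemma C_zero (hS : IsOreExtension σ δ f x) : C hS 0 = 0 := by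
  rw [C_eq_iff, map_zero]

lemma C_add (hS : IsOreExtension σ δ f x) (s t : S) :
    C hS (s + t) = C hS s + C hS t := by
  rw [C_eq_iff, map_add, E_C, E_C]

lemma f_inj (hS : IsOreExtension σ δ f x) : Function.Injective f := by
  intro a b h
  have h2 : Finsupp.single 0 a = Finsupp.single 0 b := by
    rw [← C_f hS, ← C_f hS, h]
  exact Finsupp.single_injective 0 h2

lemma C_finsuppSum (hS : IsOreExtension σ δ f x) (p : ℕ →₀ R) (g : ℕ → R → S) :
    C hS (p.sum g) = p.sum fun i b => C hS (g i b) := by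
  rw [C_eq_iff, map_finsuppSum]
  exact (Finsupp.sum_congr fun i hi => (E_C hS _).symm)

/-- Evaluation of a sum of singles along an injective reindexing. -/
lemma sum_single_apply_inj (p : ℕ →₀ R) {φ : ℕ → ℕ} (hφ : Function.Injective φ)
    {g : R → R} (hg : g 0 = 0) (k : ℕ) :
    (p.sum fun i b => Finsupp.single (φ i) (g b)) (φ k) = g (p k) := by
  classical
  rw [Finsupp.sum_apply, Finsupp.sum]
  by_cases hk : k ∈ p.support
  · rw [Finset.sum_eq_single_of_mem k hk]
    · simp
    · intro i _ hik
      rw [Finsupp.single_apply, if_neg (fun h => hik (hφ h))]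
  · rw [Finset.sum_eq_zero, Finsupp.notMem_support_iff.mp hk, hg]
    intro i hi
    rw [Finsupp.single_apply, if_neg (fun h => (by rwa [hφ h] at hi : k ∈ p.support) |> hk)]

lemma sum_single_apply_ne (p : ℕ →₀ R) {φ : ℕ → ℕ} {g : R → R} {k : ℕ}
    (hk : ∀ i, φ i ≠ k) :
    (p.sum fun i b => Finsupp.single (φ i) (g b)) k = 0 := by
  classical
  rw [Finsupp.sum_apply, Finsupp.sum]
  exact Finset.sum_eq_zero fun i _ => by rw [Finsupp.single_apply, if_neg (hk i)]

lemma C_f_mul (hS : IsOreExtension σ δ f x) (a : R) (s : S) :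
    C hS (f a * s) = (C hS s).sum fun i b => Finsupp.single i (a * b) := by
  rw [C_eq_iff, map_finsuppSum]
  conv_lhs => rw [← E_C hS s, E_apply, Finsupp.mul_sum]
  refine Finsupp.sum_congr fun i hi => ?_
  rw [E_single, map_mul, mul_assoc]

lemma C_f_mul_apply (hS : IsOreExtension σ δ f x) (a : R) (s : S) (k : ℕ) :
    C hS (f a * s) k = a * C hS s k := by
  rw [C_f_mul hS]
  exact sum_single_apply_inj (C hS s) (fun i j h => h) (mul_zero a) k

lemma C_x_mul (hS : IsOreExtension σ δ f x) (s : S) :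
    C hS (x * s) = (C hS s).sum
      fun i b => (Finsupp.single (i + 1) (σ b) + Finsupp.single i (δ b)) := by
  rw [C_eq_iff, map_finsuppSum]
  conv_lhs => rw [← E_C hS s, E_apply, Finsupp.mul_sum]
  refine Finsupp.sum_congr fun i hi => ?_
  rw [map_add, E_single, E_single, ← mul_assoc, hS.rel, add_mul, mul_assoc, ← pow_succ']

lemma delta_zero (hδ : IsSigmaDerivation σ δ) : δ 0 = 0 := by
  have := hδ.1 0 0
  simpa using this.symm

lemma C_x_mul_zero (hS : IsOreExtension σ δ f x) (hδ : IsSigmaDerivation σ δ) (s : S) :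
    C hS (x * s) 0 = δ (C hS s 0) := by
  rw [C_x_mul hS]
  have hsplit : ((C hS s).sum
      fun i b => (Finsupp.single (i + 1) (σ b) + Finsupp.single i (δ b))) 0
      = ((C hS s).sum fun i b => Finsupp.single (i + 1) (σ b)) 0
        + ((C hS s).sum fun i b => Finsupp.single i (δ b)) 0 := by
    classical
    rw [Finsupp.sum_apply, Finsupp.sum_apply, Finsupp.sum_apply, Finsupp.sum, Finsupp.sum,
      Finsupp.sum, ← Finset.sum_add_distrib]
    exact Finset.sum_congr rfl fun i _ => by simp
  rw [hsplit, sum_single_apply_ne _ (fun i => Nat.succ_ne_zero i)]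
  have := sum_single_apply_inj (C hS s) (g := δ) (φ := id) (fun i j h => h)
    (delta_zero hδ) 0
  simpa using this

lemma C_x_mul_succ (hS : IsOreExtension σ δ f x) (hδ : IsSigmaDerivation σ δ)
    (s : S) (k : ℕ) :
    C hS (x * s) (k + 1) = σ (C hS s k) + δ (C hS s (k + 1)) := by
  rw [C_x_mul hS]
  have hsplit : ((C hS s).sum
      fun i b => (Finsupp.single (i + 1) (σ b) + Finsupp.single i (δ b))) (k + 1)
      = ((C hS s).sum fun i b => Finsupp.single (i + 1) (σ b)) (k + 1)
        + ((C hS s).sum fun i b => Finsupp.single i (δ b)) (k + 1) := by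
    classical
    rw [Finsupp.sum_apply, Finsupp.sum_apply, Finsupp.sum_apply, Finsupp.sum, Finsupp.sum,
      Finsupp.sum, ← Finset.sum_add_distrib]
    exact Finset.sum_congr rfl fun i _ => by simp
  rw [hsplit]
  have h1 := sum_single_apply_inj (C hS s) (g := fun b => σ b) (φ := fun i => i + 1)
    (fun i j h => Nat.succ_injective h) (map_zero σ) k
  have h2 := sum_single_apply_inj (C hS s) (g := δ) (φ := id) (fun i j h => h)
    (delta_zero hδ) (k + 1)
  simp only [id] at h1 h2
  rw [h1, h2]

lemma C_mul (hS : IsOreExtension σ δ f x) (s t : S) :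
    C hS (s * t) = (C hS s).sum fun i b => C hS (f b * (x ^ i * t)) := by
  conv_lhs => rw [← E_C hS s, E_apply, Finsupp.sum_mul]
  rw [C_finsuppSum hS]
  exact Finsupp.sum_congr fun i hi => by rw [mul_assoc]

lemma C_mul_apply (hS : IsOreExtension σ δ f x) (s t : S) (k : ℕ) :
    C hS (s * t) k = (C hS s).sum fun i b => b * C hS (x ^ i * t) k := by
  classical
  rw [C_mul hS, Finsupp.sum_apply]
  exact Finsupp.sum_congr fun i hi => C_f_mul_apply hS _ _ _

lemma delta_iter_zero (hδ : IsSigmaDerivation σ δ) (i : ℕ) : δ^[i] 0 = 0 := by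
  induction i with
  | zero => rfl
  | succ n ih => rw [Function.iterate_succ_apply, delta_zero hδ, ih]

/-- Constant coefficient of `x^i * t`. -/
lemma C_pow_mul_zero (hS : IsOreExtension σ δ f x) (hδ : IsSigmaDerivation σ δ)
    (i : ℕ) (t : S) : C hS (x ^ i * t) 0 = δ^[i] (C hS t 0) := by
  induction i with
  | zero => simp
  | succ n ih =>
      rw [pow_succ', mul_assoc, C_x_mul_zero hS hδ, ih, ← Function.iterate_succ_apply' δ]

/-- Coefficients of `x^i * t` above `m + i` vanish, provided those of `t` vanish above
`m`. -/
lemma C_pow_mul_high (hS : IsOreExtension σ δ f x) (hδ : IsSigmaDerivation σ δ)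
    (i : ℕ) (t : S) (m : ℕ) (ht : ∀ j, m < j → C hS t j = 0) :
    ∀ k, m + i < k → C hS (x ^ i * t) k = 0 := by
  induction i with
  | zero => simpa using ht
  | succ n ih =>
      intro k hk
      rw [pow_succ', mul_assoc]
      match k, hk with
      | k + 1, hk =>
        rw [C_x_mul_succ hS hδ]
        have h1 : C hS (x ^ n * t) k = 0 := ih k (by omega)
        have h2 : C hS (x ^ n * t) (k + 1) = 0 := ih (k + 1) (by omega)
        rw [h1, h2, map_zero, delta_zero hδ, add_zero]

/-- Leading coefficient of `x^i * t`. -/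
lemma C_pow_mul_top (hS : IsOreExtension σ δ f x) (hδ : IsSigmaDerivation σ δ)
    (i : ℕ) (t : S) (m : ℕ) (ht : ∀ j, m < j → C hS t j = 0) :
    C hS (x ^ i * t) (m + i) = (⇑σ)^[i] (C hS t m) := by
  induction i with
  | zero => simp
  | succ n ih =>
      rw [pow_succ', mul_assoc, show m + (n + 1) = (m + n) + 1 from rfl,
        C_x_mul_succ hS hδ, ih,
        C_pow_mul_high hS hδ n t m ht (m + n + 1) (by omega),
        delta_zero hδ, add_zero, ← Function.iterate_succ_apply' (⇑σ)]

lemma C_ne_zero (hS : IsOreExtension σ δ f x) {s : S} (hs : s ≠ 0) : C hS s ≠ 0 := by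
  intro h
  exact hs (C_inj hS (by rw [h, C_zero hS]))

lemma support_nonempty (hS : IsOreExtension σ δ f x) {s : S} (hs : s ≠ 0) :
    (C hS s).support.Nonempty := by
  rw [Finsupp.support_nonempty_iff]
  exact C_ne_zero hS hs

lemma C_high (hS : IsOreExtension σ δ f x) {s : S} (hs : s ≠ 0) :
    ∀ j, (C hS s).support.max' (support_nonempty hS hs) < j → C hS s j = 0 := by
  intro j hj
  by_contra h
  exact absurd (Finset.le_max' _ j (Finsupp.mem_support_iff.mpr h)) (by omega)

lemma C_top_ne (hS : IsOreExtension σ δ f x) {s : S} (hs : s ≠ 0) :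
    C hS s ((C hS s).support.max' (support_nonempty hS hs)) ≠ 0 :=
  Finsupp.mem_support_iff.mp (Finset.max'_mem _ _)

lemma C_mul_top (hS : IsOreExtension σ δ f x) (hδ : IsSigmaDerivation σ δ)
    (s t : S) (n m : ℕ)
    (hsn : ∀ j, n < j → C hS s j = 0) (htm : ∀ j, m < j → C hS t j = 0) :
    C hS (s * t) (n + m) = C hS s n * (⇑σ)^[n] (C hS t m) ∧
      ∀ k, n + m < k → C hS (s * t) k = 0 := by
  classical
  constructor
  · rw [C_mul_apply hS, Finsupp.sum]
    rw [Finset.sum_eq_single n]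
    · rw [add_comm n m, C_pow_mul_top hS hδ n t m htm]
    · intro i hi hin
      have hile : i ≤ n := by
        by_contra h
        exact (Finsupp.mem_support_iff.mp hi) (hsn i (by omega))
      rw [C_pow_mul_high hS hδ i t m htm (n + m) (by omega), mul_zero]
    · intro hn
      rw [Finsupp.notMem_support_iff.mp hn, zero_mul]
  · intro k hk
    rw [C_mul_apply hS, Finsupp.sum]
    refine Finset.sum_eq_zero fun i hi => ?_
    have hile : i ≤ n := by
      by_contra h
      exact (Finsupp.mem_support_iff.mp hi) (hsn i (by omega))
    rw [C_pow_mul_high hS hδ i t m htm k (by omega), mul_zero]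

lemma sigma_iter_ne_zero (hinj : Function.Injective σ) (n : ℕ) {a : R} (ha : a ≠ 0) :
    (⇑σ)^[n] a ≠ 0 := by
  induction n with
  | zero => exact ha
  | succ k ih =>
      rw [Function.iterate_succ_apply']
      intro h
      exact ih (hinj (by rw [h, map_zero]))

lemma one_ne_zero' (hS : IsOreExtension σ δ f x) [Nontrivial R] : (1 : S) ≠ 0 := by
  intro h0
  have h1 := congrArg (C hS) h0
  rw [C_one hS, C_zero hS] at h1
  exact one_ne_zero (Finsupp.single_eq_zero.mp h1)

/-- `s = f a` whenever the coefficients of `s` vanish in positive degrees. -/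
lemma eq_f_of_high_zero (hS : IsOreExtension σ δ f x) (s : S)
    (h : ∀ j, 0 < j → C hS s j = 0) : s = f (C hS s 0) := by
  have hp : C hS s = Finsupp.single 0 (C hS s 0) := by
    ext k
    match k with
    | 0 => simp
    | k + 1 => rw [h (k + 1) (Nat.succ_pos k), Finsupp.single_apply, if_neg (by omega)]
  have := congrArg (E f x) hp
  rw [E_C hS, E_single, pow_zero, mul_one] at this
  exact this

lemma eq_f_of_mul_eq_one [IsDomain R] (hS : IsOreExtension σ δ f x)
    (hδ : IsSigmaDerivation σ δ) (hinj : Function.Injective σ)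
    {s t : S} (h : s * t = 1) : ∃ a : R, s = f a := by
  have h1 : (1 : S) ≠ 0 := one_ne_zero' hS
  have hs : s ≠ 0 := by rintro rfl; rw [zero_mul] at h; exact h1 h.symm
  have ht : t ≠ 0 := by rintro rfl; rw [mul_zero] at h; exact h1 h.symm
  set n := (C hS s).support.max' (support_nonempty hS hs) with hn
  set m := (C hS t).support.max' (support_nonempty hS ht) with hm
  have htop := (C_mul_top hS hδ s t n m (C_high hS hs) (C_high hS ht)).1
  rw [h, C_one hS] at htop
  have hne : C hS s n * (⇑σ)^[n] (C hS t m) ≠ 0 :=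
    mul_ne_zero (C_top_ne hS hs) (sigma_iter_ne_zero hinj n (C_top_ne hS ht))
  have hnm : n + m = 0 := by
    by_contra hpos
    rw [Finsupp.single_apply, if_neg (by omega)] at htop
    exact hne htop.symm
  have hn0 : n = 0 := by omega
  refine ⟨C hS s 0, eq_f_of_high_zero hS s fun j hj => C_high hS hs j (by omega)⟩

/-- Induction principle: everything in `S` is built from `f a * x ^ i` by sums. -/
lemma ore_induction (hS : IsOreExtension σ δ f x) {P : S → Prop}
    (h0 : P 0) (hadd : ∀ s t, P s → P t → P (s + t))
    (hmono : ∀ (a : R) (i : ℕ), P (f a * x ^ i)) : ∀ s, P s := by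
  intro s
  obtain ⟨p, rfl⟩ := (E_bij hS).surjective s
  induction p using Finsupp.induction with
  | zero => rw [map_zero]; exact h0
  | single_add i b p hi hb ih =>
      rw [map_add, E_single]
      exact hadd _ _ (hmono b i) ih

/-- An element commuting with `x` and with every `f a` is central. -/
lemma central_of_commutes (hS : IsOreExtension σ δ f x) {z : S}
    (hx : Commute z x) (hf : ∀ a : R, Commute z (f a)) :
    z ∈ Subring.center S := by
  rw [Subring.mem_center_iff]
  intro s
  have : ∀ s, Commute z s := by
    refine ore_induction hS (Commute.zero_right z) (fun s t hs ht => hs.add_right ht) ?_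
    intro a i
    exact (hf a).mul_right (hx.pow_right i)
  exact (this s).symm

/-- Extracting coefficients from a linear expression. -/
lemma linear_eq (hS : IsOreExtension σ δ f x) {c₁ d₁ c₂ d₂ : R}
    (h : f c₁ * x + f d₁ = f c₂ * x + f d₂) : c₁ = c₂ ∧ d₁ = d₂ := by
  have e1 : ∀ c d : R, f c * x + f d = E f x (Finsupp.single 1 c + Finsupp.single 0 d) := by
    intro c d
    rw [map_add, E_single, E_single, pow_one, pow_zero, mul_one]
  rw [e1, e1] at h
  have h2 := (E_bij hS).injective h
  constructor
  · simpa using congrArg (fun q : ℕ →₀ R => q 1) h2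
  · simpa using congrArg (fun q : ℕ →₀ R => q 0) h2

lemma C_neg (hS : IsOreExtension σ δ f x) (s : S) : C hS (-s) = -C hS s := by
  have h := C_add hS s (-s)
  rw [add_neg_cancel, C_zero hS] at h
  exact (neg_eq_of_add_eq_zero_right h.symm).symm

lemma delta_one (hδ : IsSigmaDerivation σ δ) : δ 1 = 0 := by
  have h := hδ.2 1 1
  rw [mul_one, map_one, one_mul, mul_one] at h
  -- h : δ 1 = δ 1 + δ 1
  have := add_right_cancel (a := δ 1) (b := δ 1) (c := 0)
  exact (left_eq_add.mp h)

lemma no_simple_if_delta_zero [Nontrivial R] (hS : IsOreExtension σ δ f x)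
    (hδ : IsSigmaDerivation σ δ) (hdel : ∀ a : R, δ a = 0)
    (hsimp : IsSimpleRing S) : False := by
  classical
  set J₀ : TwoSidedIdeal S := TwoSidedIdeal.mk' {s : S | C hS s 0 = 0}
    (by show C hS 0 0 = 0; rw [C_zero hS]; rfl)
    (fun {s t} hs ht => by
      show C hS (s + t) 0 = 0
      rw [C_add hS]
      show C hS s 0 + C hS t 0 = 0
      rw [hs, ht, add_zero])
    (fun {s} hs => by
      show C hS (-s) 0 = 0
      rw [C_neg hS]
      show -(C hS s 0) = 0
      rw [hs, neg_zero])
    (fun {a s} hs => by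
      show C hS (a * s) 0 = 0
      rw [C_mul_apply hS, Finsupp.sum]
      refine Finset.sum_eq_zero fun i _ => ?_
      rw [C_pow_mul_zero hS hδ, hs, delta_iter_zero hδ, mul_zero])
    (fun {s b} hs => by
      show C hS (s * b) 0 = 0
      rw [C_mul_apply hS, Finsupp.sum]
      refine Finset.sum_eq_zero fun i hi => ?_
      have hi0 : i ≠ 0 := by
        intro h
        rw [h] at hi
        exact (Finsupp.mem_support_iff.mp hi) hs
      obtain ⟨j, rfl⟩ := Nat.exists_eq_succ_of_ne_zero hi0
      rw [C_pow_mul_zero hS hδ, Function.iterate_succ_apply' δ, hdel, mul_zero]) with hJ₀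
  have hxJ : x ∈ J₀ := by
    rw [hJ₀, TwoSidedIdeal.mem_mk']
    show C hS x 0 = 0
    rw [C_x hS, Finsupp.single_apply, if_neg (by omega)]
  have hxne : x ≠ 0 := by
    intro h
    have := congrArg (C hS) h
    rw [C_x hS, C_zero hS] at this
    exact one_ne_zero (Finsupp.single_eq_zero.mp this)
  rcases hsimp.simple.eq_bot_or_eq_top J₀ with hbot | htop
  · rw [hbot, TwoSidedIdeal.mem_bot] at hxJ
    exact hxne hxJ
  · have h1 : (1 : S) ∈ J₀ := htop ▸ TwoSidedIdeal.mem_top S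
    rw [hJ₀, TwoSidedIdeal.mem_mk'] at h1
    have h1' : C hS 1 0 = 0 := h1
    rw [C_one hS, Finsupp.single_apply, if_pos rfl] at h1'
    exact one_ne_zero h1'

lemma sigma_fix [IsDomain R] (hS : IsOreExtension σ δ f x)
    (hδ : IsSigmaDerivation σ δ) (hinj : Function.Injective σ)
    (hsimp : IsSimpleRing S) {r : R} (hr : ∀ b : R, b * r = r * b)
    (hδr : δ r = 0) (hr0 : r ≠ 0) : σ r = r := by
  classical
  set T : Set S := {w : S | ∃ (s' : S) (n : ℕ), w = s' * (f r * x ^ n)} with hT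
  set G : AddSubgroup S := AddSubgroup.closure T with hG
  -- right multiples of generators stay in `G`
  have hgen : ∀ (s' : S) (n : ℕ) (b : S), (s' * (f r * x ^ n)) * b ∈ G := by
    intro s' n b
    have key : f r * (x ^ n * b)
        = (C hS (x ^ n * b)).sum fun k c => f c * (f r * x ^ k) := by
      conv_lhs => rw [← E_C hS (x ^ n * b), E_apply, Finsupp.mul_sum]
      refine Finsupp.sum_congr fun k _ => ?_
      rw [← mul_assoc, ← map_mul, ← hr, map_mul, mul_assoc]
    have : (s' * (f r * x ^ n)) * b
        = (C hS (x ^ n * b)).sum fun k c => (s' * f c) * (f r * x ^ k) := by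
      rw [mul_assoc, mul_assoc, key, Finsupp.mul_sum]
      exact Finsupp.sum_congr fun k _ => by rw [mul_assoc]
    rw [this]
    exact AddSubgroup.sum_mem G fun k _ =>
      AddSubgroup.subset_closure ⟨s' * f _, k, rfl⟩
  have hmulright : ∀ w ∈ G, ∀ b : S, w * b ∈ G := by
    intro w hw
    refine AddSubgroup.closure_induction (p := fun w _ => ∀ b : S, w * b ∈ G)
      ?_ ?_ ?_ ?_ hw
    · rintro w ⟨s', n, rfl⟩ b
      exact hgen s' n b
    · intro b
      rw [zero_mul]
      exact G.zero_mem
    · intro w₁ w₂ h₁ h₂ ih₁ ih₂ b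
      rw [add_mul]
      exact G.add_mem (ih₁ b) (ih₂ b)
    · intro w h ih b
      rw [neg_mul]
      exact G.neg_mem (ih b)
  have hmulleft : ∀ w ∈ G, ∀ a : S, a * w ∈ G := by
    intro w hw
    refine AddSubgroup.closure_induction (p := fun w _ => ∀ a : S, a * w ∈ G)
      ?_ ?_ ?_ ?_ hw
    · rintro w ⟨s', n, rfl⟩ a
      exact AddSubgroup.subset_closure ⟨a * s', n, by rw [mul_assoc]⟩
    · intro a
      rw [mul_zero]
      exact G.zero_mem
    · intro w₁ w₂ h₁ h₂ ih₁ ih₂ a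
      rw [mul_add]
      exact G.add_mem (ih₁ a) (ih₂ a)
    · intro w h ih a
      rw [mul_neg]
      exact G.neg_mem (ih a)
  set J : TwoSidedIdeal S := TwoSidedIdeal.mk' G G.zero_mem
    (fun {s t} hs ht => G.add_mem hs ht) (fun {s} hs => G.neg_mem hs)
    (fun {a w} hw => hmulleft w hw a) (fun {w b} hw => hmulright w hw b) with hJ
  have hfr_ne : f r ≠ 0 := by
    intro h
    exact hr0 (f_inj hS (by rw [h, map_zero]))
  have hfrJ : f r ∈ J := by
    rw [hJ, TwoSidedIdeal.mem_mk']
    exact AddSubgroup.subset_closure ⟨1, 0, by rw [pow_zero, mul_one, one_mul]⟩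
  have h1G : (1 : S) ∈ G := by
    rcases hsimp.simple.eq_bot_or_eq_top J with hbot | htop
    · rw [hbot, TwoSidedIdeal.mem_bot] at hfrJ
      exact absurd hfrJ hfr_ne
    · have h1 : (1 : S) ∈ J := htop ▸ TwoSidedIdeal.mem_top S
      rwa [hJ, TwoSidedIdeal.mem_mk'] at h1
  -- extract: the constant coefficient of everything in `G` is a left multiple of `r`
  have hsum : ∀ (F : Finset ℕ) (g : ℕ → R), (∀ i ∈ F, ∃ a : R, g i = a * r) →
      ∃ a : R, (∑ i ∈ F, g i) = a * r := by
    intro F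
    induction F using Finset.induction with
    | empty => exact fun g _ => ⟨0, by rw [Finset.sum_empty, zero_mul]⟩
    | insert _ _ hnotmem ih =>
        intro g hg
        obtain ⟨a₁, ha₁⟩ := hg _ (Finset.mem_insert_self _ _)
        obtain ⟨a₂, ha₂⟩ := ih g fun i hi => hg i (Finset.mem_insert_of_mem hi)
        exact ⟨a₁ + a₂, by rw [Finset.sum_insert hnotmem, ha₁, ha₂, add_mul]⟩
  have hext : ∀ w ∈ G, ∃ a : R, C hS w 0 = a * r := by
    intro w hw
    refine AddSubgroup.closure_induction (p := fun w _ => ∃ a : R, C hS w 0 = a * r)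
      ?_ ?_ ?_ ?_ hw
    · rintro w ⟨s', n, rfl⟩
      rw [C_mul_apply hS, Finsupp.sum]
      refine hsum _ _ fun i _ => ?_
      rw [C_pow_mul_zero hS hδ, C_single hS]
      match n, i with
      | 0, 0 =>
          refine ⟨C hS s' 0 * 1, ?_⟩
          rw [Function.iterate_zero_apply, Finsupp.single_apply, if_pos rfl, mul_assoc,
            one_mul]
      | 0, i + 1 =>
          refine ⟨0, ?_⟩
          rw [Finsupp.single_apply, if_pos rfl, Function.iterate_succ_apply, hδr,
            delta_iter_zero hδ, mul_zero, zero_mul]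
      | n + 1, i =>
          refine ⟨0, ?_⟩
          rw [Finsupp.single_apply, if_neg (by omega), delta_iter_zero hδ, mul_zero,
            zero_mul]
    · exact ⟨0, by rw [C_zero hS, zero_mul]; rfl⟩
    · rintro w₁ w₂ h₁ h₂ ⟨a₁, ha₁⟩ ⟨a₂, ha₂⟩
      refine ⟨a₁ + a₂, ?_⟩
      rw [C_add hS]
      show C hS w₁ 0 + C hS w₂ 0 = _
      rw [ha₁, ha₂, add_mul]
    · rintro w h ⟨a, ha⟩
      refine ⟨-a, ?_⟩
      rw [C_neg hS]
      show -(C hS w 0) = _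
      rw [ha, neg_mul]
  obtain ⟨u, hur⟩ := hext 1 h1G
  rw [C_one hS, Finsupp.single_apply, if_pos rfl] at hur
  -- `u * r = 1`
  have hur : u * r = 1 := hur.symm
  have hru : r * u = 1 := by
    have h1 : (r * u) * r = 1 * r := by rw [mul_assoc, hur, mul_one, one_mul]
    exact mul_right_cancel₀ hr0 h1
  have hu0 : u ≠ 0 := by
    intro h
    rw [h, zero_mul] at hur
    exact one_ne_zero hur.symm
  have hucomm : ∀ b : R, b * u = u * b := by
    intro b
    calc b * u = (u * r) * (b * u) := by rw [hur, one_mul]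
    _ = u * ((r * b) * u) := by noncomm_ring
    _ = u * ((b * r) * u) := by rw [hr b]
    _ = (u * b) * (r * u) := by noncomm_ring
    _ = u * b := by rw [hru, mul_one]
  have hδ1 : δ (1 : R) = 0 := delta_one hδ
  have hδu : δ u = 0 := by
    have h2 := hδ.2 r u
    rw [hru, hδ1, hδr, zero_mul, add_zero] at h2
    -- h2 : 0 = σ r * δ u
    have hσr : σ r ≠ 0 := fun h => hr0 (hinj (by rw [h, map_zero]))
    rcases mul_eq_zero.mp h2.symm with h | h
    · exact absurd h hσr
    · exact h
  -- the conjugation identity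
  have hxu : x * f u = f (σ u) * x := by
    rw [hS.rel u, hδu, map_zero, add_zero]
  have key : ∀ a : R, (r * σ u) * δ a = δ a := by
    intro a
    have w1 : f r * (x * f a) * f u = f (r * σ a * σ u) * x + f (r * δ a * u) := by
      rw [hS.rel a, mul_add, add_mul, ← mul_assoc (f r) (f (σ a)) x,
        mul_assoc (f r * f (σ a)) x (f u), hxu]
      simp only [map_mul, mul_assoc]
    have hau : f a * f u = f (u * a) := by
      rw [← map_mul, hucomm a]
    have w2 : f r * (x * f a) * f u = f (r * (σ u * σ a)) * x + f (r * (σ u * δ a)) := by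
      rw [mul_assoc (f r) (x * f a) (f u), mul_assoc x (f a) (f u), hau, hS.rel (u * a),
        map_mul σ, hδ.2 u a, hδu, zero_mul, add_zero]
      rw [mul_add]
      simp only [map_mul, mul_assoc]
    have heq := w1.symm.trans w2
    have h0 := (linear_eq hS heq).2
    -- h0 : r * δ a * u = r * (σ u * δ a)
    have hl : r * δ a * u = δ a := by
      rw [← hr (δ a), mul_assoc, hru, mul_one]
    rw [hl] at h0
    rw [mul_assoc]
    exact h0.symm
  by_cases hm : r * σ u = 1
  · have hσu : σ u = u := by
      have h3 : u * (r * σ u) = u := by rw [hm, mul_one]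
      rw [← mul_assoc, hur, one_mul] at h3
      exact h3
    have h4 : σ r * u = r * u := by
      conv_lhs => rw [← hσu, ← map_mul σ, hru, map_one]
      rw [hru]
    exact mul_right_cancel₀ hu0 h4
  · exfalso
    have hdel : ∀ a : R, δ a = 0 := by
      intro a
      have h5 : (r * σ u - 1) * δ a = 0 := by
        rw [sub_mul, one_mul, key a, sub_self]
      rcases mul_eq_zero.mp h5 with h | h
      · exact absurd (by rwa [sub_eq_zero] at h) hm
      · exact h
    exact no_simple_if_delta_zero hS hδ hdel hsimp

/-- A central element is of the form `f a` with `a ∈ Z(R)` and `δ a = 0`. -/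
lemma center_sub [IsDomain R] (hS : IsOreExtension σ δ f x)
    (hδ : IsSigmaDerivation σ δ) (hinj : Function.Injective σ)
    (hsimp : IsSimpleRing S) {z : S} (hz : z ∈ Subring.center S) :
    ∃ a : R, z = f a ∧ a ∈ Subring.center R ∧ δ a = 0 := by
  classical
  have hzc : ∀ g : S, g * z = z * g := Subring.mem_center_iff.mp hz
  by_cases hz0 : z = 0
  · refine ⟨0, by rw [hz0, map_zero], Subring.zero_mem _, delta_zero hδ⟩
  · -- the two-sided ideal of multiples of the central element `z`
    set Jz : TwoSidedIdeal S := TwoSidedIdeal.mk' {w : S | ∃ s : S, w = z * s}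
      ⟨0, (mul_zero z).symm⟩
      (fun {w₁ w₂} hw₁ hw₂ => by
        obtain ⟨s₁, rfl⟩ := hw₁
        obtain ⟨s₂, rfl⟩ := hw₂
        exact ⟨s₁ + s₂, (mul_add z s₁ s₂).symm⟩)
      (fun {w} hw => by
        obtain ⟨s, rfl⟩ := hw
        exact ⟨-s, (mul_neg z s).symm⟩)
      (fun {a w} hw => by
        obtain ⟨s, rfl⟩ := hw
        exact ⟨a * s, by rw [← mul_assoc, hzc a, mul_assoc]⟩)
      (fun {w b} hw => by
        obtain ⟨s, rfl⟩ := hw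
        exact ⟨s * b, by rw [mul_assoc]⟩) with hJz
    have hzJ : z ∈ Jz := by
      rw [hJz, TwoSidedIdeal.mem_mk']
      exact ⟨1, (mul_one z).symm⟩
    have h1 : ∃ t : S, 1 = z * t := by
      rcases hsimp.simple.eq_bot_or_eq_top Jz with hbot | htop
      · rw [hbot, TwoSidedIdeal.mem_bot] at hzJ
        exact absurd hzJ hz0
      · have h1 : (1 : S) ∈ Jz := htop ▸ TwoSidedIdeal.mem_top S
        rwa [hJz, TwoSidedIdeal.mem_mk'] at h1
    obtain ⟨t, ht⟩ := h1
    obtain ⟨a, rfl⟩ := eq_f_of_mul_eq_one hS hδ hinj ht.symm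
    refine ⟨a, rfl, ?_, ?_⟩
    · rw [Subring.mem_center_iff]
      intro b
      have := hzc (f b)
      rw [← map_mul, ← map_mul] at this
      exact f_inj hS this
    · have h2 := hzc x
      rw [hS.rel a] at h2
      have h3 : f (σ a) * x + f (δ a) = f a * x + f 0 := by
        rw [map_zero, add_zero]
        exact h2
      exact (linear_eq hS h3).2

/-- If `a ∈ Z(R)`, `δ a = 0` and `S` is simple, then `f a` is central. -/
lemma center_sup [IsDomain R] (hS : IsOreExtension σ δ f x)
    (hδ : IsSigmaDerivation σ δ) (hinj : Function.Injective σ)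
    (hsimp : IsSimpleRing S) {a : R} (ha : a ∈ Subring.center R) (hδa : δ a = 0) :
    f a ∈ Subring.center S := by
  have hcomm : ∀ b : R, b * a = a * b := Subring.mem_center_iff.mp ha
  refine central_of_commutes hS ?_ ?_
  · show f a * x = x * f a
    by_cases ha0 : a = 0
    · rw [ha0, map_zero, zero_mul, mul_zero]
    · have hfix : σ a = a := sigma_fix hS hδ hinj hsimp hcomm hδa ha0
      rw [hS.rel a, hfix, hδa, map_zero, add_zero]
  · intro b
    show f a * f b = f b * f a
    rw [← map_mul, ← map_mul, hcomm b]

end OreAux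

/-- Let `R` be a domain and `σ` injective. Then (i) no element of `R[x;σ,δ] ∖ R` is
invertible, and (ii) if `R[x;σ,δ]` is simple then its center is contained in `R` and
consists of those `r ∈ Z(R)` with `δ(r) = 0`. -/
theorem stmt_10 {R S : Type*} [Ring R] [IsDomain R] [Ring S] (σ : R →+* R) (δ : R → R)
    (hδ : IsSigmaDerivation σ δ) (hinj : Function.Injective σ) (f : R →+* S) (x : S)
    (hS : IsOreExtension σ δ f x) :
    (∀ s : S, s ∉ Set.range f → ¬ IsUnit s) ∧
    (IsSimpleRing S →
      (Subring.center S : Set S) = f '' {r : R | r ∈ Subring.center R ∧ δ r = 0}) := by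
  constructor
  · intro s hs hu
    obtain ⟨v, hv, -⟩ := isUnit_iff_exists.mp hu
    obtain ⟨a, rfl⟩ := OreAux.eq_f_of_mul_eq_one hS hδ hinj hv
    exact hs ⟨a, rfl⟩
  · intro hsimp
    ext z
    constructor
    · intro hz
      obtain ⟨a, rfl, ha, hδa⟩ := OreAux.center_sub hS hδ hinj hsimp hz
      exact ⟨a, ⟨ha, hδa⟩, rfl⟩
    · rintro ⟨a, ⟨ha, hδa⟩, rfl⟩
      exact OreAux.center_sup hS hδ hinj hsimp ha hδa
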